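/- Let F : ℝⁿ → ℝ ∪ {+∞} be proper closed convex with nonempty minimizer set X* and minimal value F*, let γ > 0, and let F_γ be the Moreau envelope of F. Fix x₀. Suppose F satisfies 2-growth with constant κ > 0 on the level set {y : F(y) ≤ F(x₀)}, i.e. F(y) − F* ≥ (κ/2)‖y − ȳ‖² for all such y, where ȳ is the Euclidean projection of y onto X*. Then for every x with F_γ(x) ≤ F_γ(x₀): F_γ(x) − F* ≥ κ/(2(γκ + 1)) · ‖x − x̄‖², where x̄ is the Euclidean projection of x onto X*. -/

import Mathlib

noncomputable section

private lemma moreau_key_ineq (γ κ a b d : ℝ) (hγ : 0 < γ) (hκ : 0 < κ)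
    (ha : 0 ≤ a) (hb : 0 ≤ b) (hd0 : 0 ≤ d) (hd : d ≤ a + b) :
    κ / (2 * (γ * κ + 1)) * d ^ 2 ≤ κ / 2 * a ^ 2 + 1 / (2 * γ) * b ^ 2 := by
  have h1 : 0 < γ * κ + 1 := by nlinarith
  have hd2 : d ^ 2 ≤ (a + b) ^ 2 := by nlinarith
  rw [div_mul_eq_mul_div, div_le_iff₀ (by positivity)]
  have key : κ * (a + b) ^ 2 ≤ (κ / 2 * a ^ 2 + 1 / (2 * γ) * b ^ 2) * (2 * (γ * κ + 1)) := by
    have h2 : 0 < 2 * γ := by linarith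
    have expand : (κ / 2 * a ^ 2 + 1 / (2 * γ) * b ^ 2) * (2 * (γ * κ + 1)) - κ * (a + b) ^ 2
        = (γ * κ * a - b) ^ 2 / γ := by
      field_simp
      ring
    nlinarith [sq_nonneg (γ * κ * a - b), div_nonneg (sq_nonneg (γ * κ * a - b)) hγ.le]
  calc κ * d ^ 2 ≤ κ * (a + b) ^ 2 := by nlinarith
    _ ≤ _ := key

set_option maxHeartbeats 1000000 in
theorem moreau_envelope_two_growth (n : ℕ)
    (F : EuclideanSpace ℝ (Fin n) → EReal)
    (hbot : ∀ x, F x ≠ ⊥) (hproper : ∃ x, F x ≠ ⊤)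
    (hclosed : LowerSemicontinuous F)
    (hconvex : ∀ (u v : EuclideanSpace ℝ (Fin n)) (a c : ℝ), 0 ≤ a → 0 ≤ c → a + c = 1 →
      F (a • u + c • v) ≤ (a : EReal) * F u + (c : EReal) * F v)
    (Fs : ℝ) (Xs : Set (EuclideanSpace ℝ (Fin n)))
    (hXsne : Xs.Nonempty) (hXs : Xs = {y | F y = (Fs : EReal)})
    (hmin : ∀ y, (Fs : EReal) ≤ F y)
    (γ : ℝ) (hγ : 0 < γ)
    (Fγ : EuclideanSpace ℝ (Fin n) → EReal)
    (hFγ : ∀ x, Fγ x = ⨅ u, F u + ((1 / (2 * γ) * ‖u - x‖ ^ 2 : ℝ) : EReal))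
    (x₀ : EuclideanSpace ℝ (Fin n)) (κ : ℝ) (hκ : 0 < κ)
    (hgrowth : ∀ y, F y ≤ F x₀ → ∀ ybar ∈ Xs, (∀ z ∈ Xs, ‖y - ybar‖ ≤ ‖y - z‖) →
      ((Fs + κ / 2 * ‖y - ybar‖ ^ 2 : ℝ) : EReal) ≤ F y) :
    ∀ x, Fγ x ≤ Fγ x₀ → ∀ xbar ∈ Xs, (∀ z ∈ Xs, ‖x - xbar‖ ≤ ‖x - z‖) →
      ((Fs + κ / (2 * (γ * κ + 1)) * ‖x - xbar‖ ^ 2 : ℝ) : EReal) ≤ Fγ x := by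
  intro x hxx₀ xbar hxbar hxproj
  -- basic facts about Fγ
  have hFle : ∀ (w u : EuclideanSpace ℝ (Fin n)),
      Fγ w ≤ F u + ((1 / (2 * γ) * ‖u - w‖ ^ 2 : ℝ) : EReal) := by
    intro w u
    rw [hFγ]
    exact iInf_le _ u
  have hpen_nonneg : ∀ (w u : EuclideanSpace ℝ (Fin n)),
      (0 : EReal) ≤ ((1 / (2 * γ) * ‖u - w‖ ^ 2 : ℝ) : EReal) := by
    intro w u
    exact_mod_cast (by positivity : (0:ℝ) ≤ 1 / (2 * γ) * ‖u - w‖ ^ 2)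
  have hFu_le_term : ∀ (w u : EuclideanSpace ℝ (Fin n)),
      F u ≤ F u + ((1 / (2 * γ) * ‖u - w‖ ^ 2 : ℝ) : EReal) :=
    fun w u => le_add_of_nonneg_right (hpen_nonneg w u)
  -- Fγ x₀ ≤ F x₀
  have hFγx₀ : Fγ x₀ ≤ F x₀ := by
    have := hFle x₀ x₀
    simpa using this
  -- Xs is closed and convex
  have hXs_closed : IsClosed Xs := by
    have heq : Xs = F ⁻¹' Set.Iic (Fs : EReal) := by
      ext y
      simp only [hXs, Set.mem_setOf_eq, Set.mem_preimage, Set.mem_Iic]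
      exact ⟨fun h => h.le, fun h => le_antisymm h (hmin y)⟩
    rw [heq]
    exact hclosed.isClosed_preimage _
  -- projections onto Xs exist (Euclidean space is proper)
  have hproj : ∀ u : EuclideanSpace ℝ (Fin n), ∃ v ∈ Xs, ∀ z ∈ Xs, ‖u - v‖ ≤ ‖u - z‖ := by
    intro u
    obtain ⟨v, hv, hveq⟩ := hXs_closed.exists_infDist_eq_dist hXsne u
    refine ⟨v, hv, fun z hz => ?_⟩
    rw [← dist_eq_norm, ← dist_eq_norm, ← hveq]
    exact Metric.infDist_le_dist_of_mem hz
  have hFxbar : F xbar = (Fs : EReal) := by rw [hXs] at hxbar; exact hxbar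
  by_cases hcase : Fγ x < F x₀
  · -- main case
    by_contra hT
    push_neg at hT
    have hlt : Fγ x < min ((Fs + κ / (2 * (γ * κ + 1)) * ‖x - xbar‖ ^ 2 : ℝ) : EReal) (F x₀) :=
      lt_min hT hcase
    rw [hFγ] at hlt
    obtain ⟨u, hu⟩ := iInf_lt_iff.mp hlt
    have hu1 : F u + ((1 / (2 * γ) * ‖u - x‖ ^ 2 : ℝ) : EReal) <
        ((Fs + κ / (2 * (γ * κ + 1)) * ‖x - xbar‖ ^ 2 : ℝ) : EReal) :=
      lt_of_lt_of_le hu (min_le_left _ _)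
    have hu2 : F u < F x₀ := lt_of_le_of_lt (hFu_le_term x u) (lt_of_lt_of_le hu (min_le_right _ _))
    -- F u is finite
    have hune_top : F u ≠ ⊤ := by
      intro h
      rw [h] at hu1
      have : ((1 / (2 * γ) * ‖u - x‖ ^ 2 : ℝ) : EReal) ≠ ⊥ := by
        exact_mod_cast EReal.coe_ne_bot _
      rw [EReal.top_add_of_ne_bot this] at hu1
      exact (not_top_lt hu1).elim
    have hufin : ((F u).toReal : EReal) = F u := EReal.coe_toReal hune_top (hbot u)
    set A := (F u).toReal with hA
    -- projection of u onto Xs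
    obtain ⟨ubar, hubar, hubarproj⟩ := hproj u
    have hgu := hgrowth u hu2.le ubar hubar hubarproj
    -- convert to reals
    rw [← hufin] at hgu hu1
    rw [← EReal.coe_add] at hu1
    have hgu' : Fs + κ / 2 * ‖u - ubar‖ ^ 2 ≤ A := by exact_mod_cast hgu
    have hu1' : A + 1 / (2 * γ) * ‖u - x‖ ^ 2 <
        Fs + κ / (2 * (γ * κ + 1)) * ‖x - xbar‖ ^ 2 := by exact_mod_cast hu1
    have htri : ‖x - xbar‖ ≤ ‖u - ubar‖ + ‖u - x‖ := by
      calc ‖x - xbar‖ ≤ ‖x - ubar‖ := hxproj ubar hubar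
        _ = ‖(x - u) + (u - ubar)‖ := by rw [sub_add_sub_cancel]
        _ ≤ ‖x - u‖ + ‖u - ubar‖ := norm_add_le _ _
        _ = ‖u - ubar‖ + ‖u - x‖ := by rw [norm_sub_rev x u]; ring
    have hkey := moreau_key_ineq γ κ ‖u - ubar‖ ‖u - x‖ ‖x - xbar‖ hγ hκ
      (norm_nonneg _) (norm_nonneg _) (norm_nonneg _) htri
    linarith
  · -- degenerate case : Fγ x = F x₀
    push_neg at hcase
    have hEx : F x₀ = Fγ x := le_antisymm (le_trans hcase (le_refl _)) (le_trans hxx₀ hFγx₀)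
    -- F x₀ is finite
    have hFγx_le : Fγ x ≤ ((Fs + 1 / (2 * γ) * ‖xbar - x‖ ^ 2 : ℝ) : EReal) := by
      calc Fγ x ≤ F xbar + ((1 / (2 * γ) * ‖xbar - x‖ ^ 2 : ℝ) : EReal) := hFle x xbar
        _ = ((Fs + 1 / (2 * γ) * ‖xbar - x‖ ^ 2 : ℝ) : EReal) := by
            rw [hFxbar, ← EReal.coe_add]
    have hx₀ne_top : F x₀ ≠ ⊤ := by
      intro h
      rw [h] at hEx
      rw [← hEx] at hFγx_le
      exact (EReal.coe_lt_top _).not_ge hFγx_le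

    have hx₀fin : ((F x₀).toReal : EReal) = F x₀ := EReal.coe_toReal hx₀ne_top (hbot x₀)
    set B := (F x₀).toReal with hB
    -- x₀ is a global minimizer of F
    have hminx₀ : ∀ u, F x₀ ≤ F u := by
      intro u
      by_contra h
      push_neg at h
      have hune_top : F u ≠ ⊤ := fun hh => by rw [hh] at h; exact not_top_lt h
      have hufin : ((F u).toReal : EReal) = F u := EReal.coe_toReal hune_top (hbot u)
      set A := (F u).toReal with hA
      have hAB : A < B := by
        rw [← hufin, ← hx₀fin] at h
        exact_mod_cast h
      set C := 1 / (2 * γ) * ‖u - x₀‖ ^ 2 with hC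
      have hC0 : 0 ≤ C := by positivity
      set t := min 1 ((B - A) / (2 * (C + 1))) with ht
      have ht0 : 0 < t := lt_min one_pos (div_pos (by linarith) (by positivity))
      have ht1 : t ≤ 1 := min_le_left _ _
      have ht2 : t ≤ (B - A) / (2 * (C + 1)) := min_le_right _ _
      set v := (1 - t) • x₀ + t • u with hv
      have hconv := hconvex x₀ u (1 - t) t (by linarith) ht0.le (by ring)
      -- Fγ x₀ = F x₀, hence F x₀ ≤ each term
      have hEx₀ : F x₀ = Fγ x₀ := le_antisymm (le_trans hcase hxx₀) hFγx₀
      have hterm : F x₀ ≤ F v + ((1 / (2 * γ) * ‖v - x₀‖ ^ 2 : ℝ) : EReal) := by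
        rw [hEx₀]; exact hFle x₀ v
      have hvnorm : ‖v - x₀‖ = t * ‖u - x₀‖ := by
        have : v - x₀ = t • (u - x₀) := by rw [hv]; module
        rw [this, norm_smul, Real.norm_eq_abs, abs_of_pos ht0]
      have hchain : (B : EReal) ≤
          (((1 - t) * B + t * A + 1 / (2 * γ) * ‖v - x₀‖ ^ 2 : ℝ) : EReal) := by
        calc (B : EReal) = F x₀ := hx₀fin
          _ ≤ F v + ((1 / (2 * γ) * ‖v - x₀‖ ^ 2 : ℝ) : EReal) := hterm
          _ ≤ (((1 - t) * B + t * A : ℝ) : EReal) +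
              ((1 / (2 * γ) * ‖v - x₀‖ ^ 2 : ℝ) : EReal) := by
              apply add_le_add_left
              calc F v ≤ ((1 - t : ℝ) : EReal) * F x₀ + ((t : ℝ) : EReal) * F u := hconv
                _ = (((1 - t) * B + t * A : ℝ) : EReal) := by
                    rw [← hx₀fin, ← hufin]
                    push_cast
                    ring
          _ = _ := by rw [← EReal.coe_add]
      have hreal : B ≤ (1 - t) * B + t * A + 1 / (2 * γ) * ‖v - x₀‖ ^ 2 := by
        exact_mod_cast hchain
      rw [hvnorm] at hreal
      have hexp : 1 / (2 * γ) * (t * ‖u - x₀‖) ^ 2 = t ^ 2 * C := by rw [hC]; ring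
      rw [hexp] at hreal
      -- B ≤ (1-t)B + tA + t²C  ⇒  t(B-A) ≤ t²C  ⇒  B-A ≤ tC ≤ (B-A)·C/(2(C+1)) < B-A
      have h1 : B - A ≤ t * C := by
        have := mul_le_mul_of_nonneg_left (le_refl t) ht0.le
        nlinarith
      have h2 : t * C < B - A := by
        have : t * C ≤ (B - A) / (2 * (C + 1)) * C :=
          mul_le_mul_of_nonneg_right ht2 hC0
        have hlt : (B - A) / (2 * (C + 1)) * C < B - A := by
          rw [div_mul_eq_mul_div, div_lt_iff₀ (by positivity)]
          nlinarith
        linarith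
      linarith
    -- hence F x₀ = Fs and Fγ x = Fs
    have hFx₀Fs : F x₀ = (Fs : EReal) := by
      refine le_antisymm ?_ (hmin x₀)
      rw [← hFxbar]
      exact hminx₀ xbar
    have hFγxFs : Fγ x = (Fs : EReal) := by rw [← hEx, hFx₀Fs]
    -- show F x ≤ Fs using lower semicontinuity
    have hFx : F x ≤ (Fs : EReal) := by
      by_contra h
      push_neg at h
      obtain ⟨y, hy1, hy2⟩ := exists_between h
      have hyne_top : y ≠ ⊤ := fun hh => by rw [hh] at hy2; exact not_top_lt hy2
      have hyne_bot : y ≠ ⊥ := fun hh => by rw [hh] at hy1; exact not_lt_bot hy1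
      have hyfin : ((y.toReal : ℝ) : EReal) = y := EReal.coe_toReal hyne_top hyne_bot
      set y' := y.toReal with hy'
      have hy'Fs : Fs < y' := by rw [← hyfin] at hy1; exact_mod_cast hy1
      have hev : ∀ᶠ z in nhds x, y < F z := hclosed x y hy2
      obtain ⟨δ, hδ0, hδ⟩ := Metric.eventually_nhds_iff.mp hev
      set M := min y' (Fs + 1 / (2 * γ) * δ ^ 2) with hM
      have hMle : (M : EReal) ≤ Fγ x := by
        rw [hFγ]
        apply le_iInf
        intro u
        by_cases hcu : dist u x < δ
        · calc (M : EReal) ≤ (y' : EReal) := by exact_mod_cast min_le_left _ _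
            _ = y := hyfin
            _ ≤ F u := (hδ hcu).le
            _ ≤ _ := hFu_le_term x u
        · push_neg at hcu
          have hδu : δ ≤ ‖u - x‖ := by rwa [dist_eq_norm] at hcu
          calc (M : EReal) ≤ ((Fs + 1 / (2 * γ) * δ ^ 2 : ℝ) : EReal) := by
                exact_mod_cast min_le_right _ _
            _ = (Fs : EReal) + ((1 / (2 * γ) * δ ^ 2 : ℝ) : EReal) := by
                rw [← EReal.coe_add]
            _ ≤ F u + ((1 / (2 * γ) * ‖u - x‖ ^ 2 : ℝ) : EReal) := by
                apply add_le_add (hmin u)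
                have : 1 / (2 * γ) * δ ^ 2 ≤ 1 / (2 * γ) * ‖u - x‖ ^ 2 := by
                  apply mul_le_mul_of_nonneg_left _ (by positivity)
                  nlinarith
                exact_mod_cast this
      rw [hFγxFs] at hMle
      have hMle' : M ≤ Fs := by exact_mod_cast hMle
      have hpos : 0 < 1 / (2 * γ) * δ ^ 2 := by positivity
      have : Fs < M := lt_min hy'Fs (by linarith)
      linarith
    have hxXs : x ∈ Xs := by rw [hXs]; exact le_antisymm hFx (hmin x)
    have hxzero : ‖x - xbar‖ = 0 := by
      have h1 := hxproj x hxXs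
      simp only [sub_self, norm_zero] at h1
      exact le_antisymm h1 (norm_nonneg _)
    rw [hxzero, hFγxFs]
    norm_num
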